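/- For the network N_V with vertices {0, tan θ, -tan θ, i, -i} (0 < θ < π/4), edges from 0 to each of the four outer vertices and the four outer edges [tan θ, i], [i, -tan θ], [-tan θ, -i], [-i, tan θ], with weights a_{[0,±tan θ]} = -2 sin θ, a_{[0,±i]} = -2 cos θ, and weight 1 on the four outer edges, the network is balanced: the force ∑_{q∈V_p} a_{[p,q]}(q-p)/|q-p| vanishes at every vertex p. -/

import Mathlib

open Complex

/-- The network `N_V` with vertices `{0, tan θ, -tan θ, i, -i}`
(`0 < θ < π/4`), edges from `0` to each of the four outer vertices and the
four outer edges `[tan θ, i], [i, -tan θ], [-tan θ, -i], [-i, tan θ]`, with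
weights `a_{[0,±tan θ]} = -2 sin θ`, `a_{[0,±i]} = -2 cos θ` and weight `1` on
the four outer edges, is balanced: the force
`∑_{q ∈ V_p} a_{[p,q]} (q-p)/|q-p|` vanishes at every vertex `p`. -/
theorem network_NV_balanced (θ : ℝ) (hθ₀ : 0 < θ) (hθ₁ : θ < Real.pi / 4) :
    -- force at the vertex 0
    (((-2 * Real.sin θ : ℝ) : ℂ) * ((Real.tan θ : ℂ) - 0) /
        (‖(Real.tan θ : ℂ) - 0‖ : ℂ)
      + ((-2 * Real.sin θ : ℝ) : ℂ) * (-(Real.tan θ : ℂ) - 0) /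
          (‖-(Real.tan θ : ℂ) - 0‖ : ℂ)
      + ((-2 * Real.cos θ : ℝ) : ℂ) * (Complex.I - 0) /
          (‖Complex.I - 0‖ : ℂ)
      + ((-2 * Real.cos θ : ℝ) : ℂ) * (-Complex.I - 0) /
          (‖-Complex.I - 0‖ : ℂ) = 0) ∧
    -- force at the vertex tan θ
    (((-2 * Real.sin θ : ℝ) : ℂ) * (0 - (Real.tan θ : ℂ)) /
        (‖0 - (Real.tan θ : ℂ)‖ : ℂ)
      + (1 : ℂ) * (Complex.I - (Real.tan θ : ℂ)) /
          (‖Complex.I - (Real.tan θ : ℂ)‖ : ℂ)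
      + (1 : ℂ) * (-Complex.I - (Real.tan θ : ℂ)) /
          (‖-Complex.I - (Real.tan θ : ℂ)‖ : ℂ) = 0) ∧
    -- force at the vertex -tan θ
    (((-2 * Real.sin θ : ℝ) : ℂ) * (0 - (-(Real.tan θ : ℂ))) /
        (‖0 - (-(Real.tan θ : ℂ))‖ : ℂ)
      + (1 : ℂ) * (Complex.I - (-(Real.tan θ : ℂ))) /
          (‖Complex.I - (-(Real.tan θ : ℂ))‖ : ℂ)
      + (1 : ℂ) * (-Complex.I - (-(Real.tan θ : ℂ))) /
          (‖-Complex.I - (-(Real.tan θ : ℂ))‖ : ℂ) = 0) ∧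
    -- force at the vertex i
    (((-2 * Real.cos θ : ℝ) : ℂ) * (0 - Complex.I) /
        (‖0 - Complex.I‖ : ℂ)
      + (1 : ℂ) * ((Real.tan θ : ℂ) - Complex.I) /
          (‖(Real.tan θ : ℂ) - Complex.I‖ : ℂ)
      + (1 : ℂ) * (-(Real.tan θ : ℂ) - Complex.I) /
          (‖-(Real.tan θ : ℂ) - Complex.I‖ : ℂ) = 0) ∧
    -- force at the vertex -i
    (((-2 * Real.cos θ : ℝ) : ℂ) * (0 - (-Complex.I)) /
        (‖0 - (-Complex.I)‖ : ℂ)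
      + (1 : ℂ) * ((Real.tan θ : ℂ) - (-Complex.I)) /
          (‖(Real.tan θ : ℂ) - (-Complex.I)‖ : ℂ)
      + (1 : ℂ) * (-(Real.tan θ : ℂ) - (-Complex.I)) /
          (‖-(Real.tan θ : ℂ) - (-Complex.I)‖ : ℂ) = 0) := by
  have hpi := Real.pi_pos
  have hc : 0 < Real.cos θ := Real.cos_pos_of_mem_Ioo ⟨by linarith, by linarith⟩
  have hs : 0 < Real.sin θ := Real.sin_pos_of_pos_of_lt_pi hθ₀ (by linarith)
  have ht : 0 < Real.tan θ := Real.tan_pos_of_pos_of_lt_pi_div_two hθ₀ (by linarith)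
  set t := Real.tan θ with htdef
  set c := Real.cos θ with hcdef
  set s := Real.sin θ with hsdef
  have hts : t = s / c := Real.tan_eq_sin_div_cos θ
  have hsc : s ^ 2 + c ^ 2 = 1 := Real.sin_sq_add_cos_sq θ
  have h1c : t ^ 2 + 1 = (1 / c) ^ 2 := by
    rw [hts]; field_simp; nlinarith
  have habs : ∀ z : ℂ, z.re ^ 2 = t ^ 2 → z.im ^ 2 = 1 → ‖z‖ = 1 / c := by
    intro z h1 h2
    rw [Complex.norm_def, Complex.normSq_apply, ← sq, ← sq, h1, h2, h1c]
    exact Real.sqrt_sq (by positivity)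
  have e1 : ‖Complex.I - (t:ℂ)‖ = 1 / c :=
    habs _ (by simp) (by simp)
  have e2 : ‖-Complex.I - (t:ℂ)‖ = 1 / c :=
    habs _ (by simp) (by simp)
  have e3 : ‖Complex.I - (-(t:ℂ))‖ = 1 / c :=
    habs _ (by simp) (by simp)
  have e4 : ‖-Complex.I - (-(t:ℂ))‖ = 1 / c :=
    habs _ (by simp) (by simp)
  have e5 : ‖(t:ℂ) - Complex.I‖ = 1 / c :=
    habs _ (by simp) (by simp)
  have e6 : ‖-(t:ℂ) - Complex.I‖ = 1 / c :=
    habs _ (by simp) (by simp)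
  have e7 : ‖(t:ℂ) - (-Complex.I)‖ = 1 / c :=
    habs _ (by simp) (by simp)
  have e8 : ‖-(t:ℂ) - (-Complex.I)‖ = 1 / c :=
    habs _ (by simp) (by simp)
  have e9 : ‖(t:ℂ) - 0‖ = t := by
    simp [Complex.norm_real, abs_of_pos ht]
  have e10 : ‖-(t:ℂ) - 0‖ = t := by
    simp [Complex.norm_real, abs_of_pos ht]
  have e11 : ‖0 - (t:ℂ)‖ = t := by
    simp [Complex.norm_real, abs_of_pos ht]
  have e12 : ‖0 - (-(t:ℂ))‖ = t := by
    simp [Complex.norm_real, abs_of_pos ht]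
  have hcne : (c : ℂ) ≠ 0 := by exact_mod_cast hc.ne'
  have htne : (t : ℂ) ≠ 0 := by exact_mod_cast ht.ne'
  have hsne : (s : ℂ) ≠ 0 := by exact_mod_cast hs.ne'
  have htsC : (t : ℂ) = (s : ℂ) / (c : ℂ) := by exact_mod_cast hts
  refine ⟨?_, ?_, ?_, ?_, ?_⟩
  · rw [e9, e10]
    simp only [sub_zero, norm_neg, Complex.norm_I]
    push_cast
    field_simp
    try ring
  · rw [e11, e1, e2, htsC]
    push_cast
    field_simp
    try ring
  · rw [e12, e3, e4, htsC]
    push_cast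
    field_simp
    try ring
  · rw [e5, e6]
    have : ‖0 - Complex.I‖ = 1 := by simp
    rw [this, htsC]
    push_cast
    field_simp
    try ring
  · rw [e7, e8]
    have : ‖0 - (-Complex.I)‖ = 1 := by simp
    rw [this, htsC]
    push_cast
    field_simp
    try ring
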